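/- Let d > 1 be odd and n ≥ 2. Suppose ρ is a density matrix on (C^d)^{⊗n} admitting a set of non-contextual value assignments: a finite set S, a probability distribution q on S, and maps λ_ν : V → U_d (d-th roots of unity) each additive on symplectically orthogonal pairs, with Tr(T_u ρ) = Σ_ν λ_ν(u) q(ν) for all u ∈ V. Then the Wigner function W_ρ(u) = d^{-n} Tr(A_u ρ) is non-negative for every u ∈ V. -/

import Mathlib

open Complex Matrix BigOperators Finset
open scoped ComplexOrder

noncomputable section

/-- ω = e^{2πi/d} -/
def omeg (d : ℕ) : ℂ := Complex.exp (2 * Real.pi * Complex.I / d)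

/-- ω raised to a `ZMod d` exponent. -/
def wpow (d : ℕ) [NeZero d] (x : ZMod d) : ℂ := omeg d ^ x.val

/-- standard inner product on `(ZMod d)^n` -/
def ip {d n : ℕ} (a b : Fin n → ZMod d) : ZMod d := ∑ i, a i * b i

/-- the phase space `V = Z_d^n × Z_d^n` -/
abbrev PS (d n : ℕ) := (Fin n → ZMod d) × (Fin n → ZMod d)

/-- symplectic form `[u,v] = (u_Z|v_X) − (u_X|v_Z)` -/
def symp {d n : ℕ} (u v : PS d n) : ZMod d := ip u.1 v.2 - ip u.2 v.1

/-- `Z^a = Z^{a_1} ⊗ ⋯ ⊗ Z^{a_n}` : diagonal matrix with entries `ω^{(a|k)}` -/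
def Zop (d n : ℕ) [NeZero d] (a : Fin n → ZMod d) :
    Matrix (Fin n → ZMod d) (Fin n → ZMod d) ℂ :=
  Matrix.of fun k l => if k = l then wpow d (ip a k) else 0

/-- `X^a = X^{a_1} ⊗ ⋯ ⊗ X^{a_n}` : shift matrix `|l⟩ ↦ |l + a⟩` -/
def Xop (d n : ℕ) [NeZero d] (a : Fin n → ZMod d) :
    Matrix (Fin n → ZMod d) (Fin n → ZMod d) ℂ :=
  Matrix.of fun k l => if k = l + a then 1 else 0

/-- Heisenberg–Weyl operator `T_u = ω^{-(u_Z|u_X)/2} Z^{u_Z} X^{u_X}` -/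
def HW (d n : ℕ) [NeZero d] (u : PS d n) :
    Matrix (Fin n → ZMod d) (Fin n → ZMod d) ℂ :=
  wpow d (-((2 : ZMod d)⁻¹ * ip u.1 u.2)) • (Zop d n u.1 * Xop d n u.2)

/-- phase-point operator `A_u = d^{-n} Σ_v ω^{[u,v]} T_v` -/
def phasePoint (d n : ℕ) [NeZero d] (u : PS d n) :
    Matrix (Fin n → ZMod d) (Fin n → ZMod d) ℂ :=
  ((d : ℂ) ^ n)⁻¹ • ∑ v : PS d n, wpow d (symp u v) • HW d n v

/-- spectral projector `Π_u^s = (1/d) Σ_k ω^{-ks} T_u^k` -/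
def specProj (d n : ℕ) [NeZero d] (a : PS d n) (s : ZMod d) :
    Matrix (Fin n → ZMod d) (Fin n → ZMod d) ℂ :=
  (d : ℂ)⁻¹ • ∑ k : ZMod d, wpow d (-(k * s)) • (HW d n a) ^ (k.val)



section AuxLemmas

-- ip lemmas
section IP
variable {d n : ℕ}

lemma ip_comm (a b : Fin n → ZMod d) : ip a b = ip b a := by
  unfold ip; exact Finset.sum_congr rfl fun i _ => mul_comm _ _

lemma ip_zero_right (a : Fin n → ZMod d) : ip a 0 = 0 := by
  simp [ip]

lemma ip_zero_left (a : Fin n → ZMod d) : ip 0 a = 0 := by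
  simp [ip]

lemma ip_add_right (a b c : Fin n → ZMod d) : ip a (b + c) = ip a b + ip a c := by
  unfold ip
  rw [← Finset.sum_add_distrib]
  exact Finset.sum_congr rfl fun i _ => by simp [mul_add]

lemma ip_neg_right (a b : Fin n → ZMod d) : ip a (-b) = -ip a b := by
  unfold ip
  rw [← Finset.sum_neg_distrib]
  exact Finset.sum_congr rfl fun i _ => by simp

lemma ip_sub_right (a b c : Fin n → ZMod d) : ip a (b - c) = ip a b - ip a c := by
  rw [sub_eq_add_neg, ip_add_right, ip_neg_right, sub_eq_add_neg]

lemma ip_single_right (a : Fin n → ZMod d) (i : Fin n) (c : ZMod d) :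
    ip a (Pi.single i c) = a i * c := by
  unfold ip
  rw [Finset.sum_eq_single i]
  · rw [Pi.single_eq_same]
  · intro j _ hj
    rw [Pi.single_eq_of_ne hj, mul_zero]
  · intro h; exact absurd (Finset.mem_univ i) h

end IP

-- symp lemmas
section SYMP
variable {d n : ℕ}

lemma symp_mk (x y x' y' : Fin n → ZMod d) :
    symp (d := d) (n := n) (x, y) (x', y') = ip x y' - ip y x' := rfl

lemma symp_add_right (u v w : PS d n) : symp u (v + w) = symp u v + symp u w := by
  obtain ⟨a, b⟩ := u; obtain ⟨x, y⟩ := v; obtain ⟨x', y'⟩ := w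
  show ip a (y + y') - ip b (x + x') = (ip a y - ip b x) + (ip a y' - ip b x')
  rw [ip_add_right, ip_add_right]; ring

end SYMP


lemma zmod_natCast_val_eq {N : ℕ} [NeZero N] (x : ZMod N) : ((x.val : ℕ) : ZMod N) = x := by
  rw [ZMod.natCast_val, ZMod.cast_id]

lemma zmod_dvd_iff {N : ℕ} [NeZero N] (x y : ZMod N) :
    x ∣ y ↔ (Nat.gcd x.val N) ∣ y.val := by
  constructor
  · rintro ⟨t, rfl⟩
    rw [ZMod.val_mul]
    exact (Nat.dvd_mod_iff (Nat.gcd_dvd_right _ _)).mpr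
      (Dvd.dvd.mul_right (Nat.gcd_dvd_left _ _) _)
  · intro h
    have hbez := Nat.gcd_eq_gcd_ab x.val N
    have hcast := congrArg (fun z : ℤ => (z : ZMod N)) hbez
    push_cast at hcast
    rw [ZMod.natCast_self, zero_mul, add_zero, zmod_natCast_val_eq] at hcast
    -- hcast : (gcd x.val N : ZMod N) = x * (gcdA ..)
    have hx : x ∣ ((Nat.gcd x.val N : ℕ) : ZMod N) := ⟨_, hcast⟩
    obtain ⟨t, ht⟩ := h
    have hy : y = ((Nat.gcd x.val N : ℕ) : ZMod N) * (t : ZMod N) := by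
      have : ((y.val : ℕ) : ZMod N) = (((Nat.gcd x.val N) * t : ℕ) : ZMod N) := by rw [← ht]
      rw [zmod_natCast_val_eq] at this
      rw [this, Nat.cast_mul]
    exact hy ▸ hx.mul_right _

lemma zmod_dvd_total {p k : ℕ} (hp : p.Prime) (hk : 0 < k) (x y : ZMod (p ^ k)) :
    x ∣ y ∨ y ∣ x := by
  haveI : NeZero (p ^ k) := ⟨(Nat.pow_pos hp.pos).ne'⟩
  obtain ⟨i, hi, hieq⟩ := (Nat.dvd_prime_pow hp).mp (Nat.gcd_dvd_right x.val (p ^ k))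
  obtain ⟨j, hj, hjeq⟩ := (Nat.dvd_prime_pow hp).mp (Nat.gcd_dvd_right y.val (p ^ k))
  rcases le_total i j with hij | hij
  · left
    rw [zmod_dvd_iff]
    calc Nat.gcd x.val (p ^ k) = p ^ i := hieq
    _ ∣ p ^ j := pow_dvd_pow p hij
    _ = Nat.gcd y.val (p ^ k) := hjeq.symm
    _ ∣ y.val := Nat.gcd_dvd_left _ _
  · right
    rw [zmod_dvd_iff]
    calc Nat.gcd y.val (p ^ k) = p ^ j := hjeq
    _ ∣ p ^ i := pow_dvd_pow p hij
    _ = Nat.gcd x.val (p ^ k) := hieq.symm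
    _ ∣ x.val := Nat.gcd_dvd_left _ _

lemma exists_dvd_all {p k : ℕ} (hp : p.Prime) (hk : 0 < k) {ι : Type*} [Fintype ι] [Nonempty ι]
    (f : ι → ZMod (p ^ k)) : ∃ i, ∀ j, f i ∣ f j := by
  haveI : NeZero (p ^ k) := ⟨(Nat.pow_pos hp.pos).ne'⟩
  obtain ⟨i, _, hi⟩ := Finset.exists_min_image Finset.univ
    (fun i => Nat.gcd (f i).val (p ^ k)) ⟨Classical.arbitrary ι, Finset.mem_univ _⟩
  refine ⟨i, fun j => ?_⟩
  obtain ⟨s, hs, hseq⟩ := (Nat.dvd_prime_pow hp).mp (Nat.gcd_dvd_right (f i).val (p ^ k))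
  obtain ⟨t, ht, hteq⟩ := (Nat.dvd_prime_pow hp).mp (Nat.gcd_dvd_right (f j).val (p ^ k))
  have hle : s ≤ t := by
    have h1 : p ^ s ≤ p ^ t := by
      rw [← hseq, ← hteq]; exact hi j (Finset.mem_univ j)
    exact (Nat.pow_le_pow_iff_right hp.one_lt).mp h1
  rw [zmod_dvd_iff]
  calc Nat.gcd (f i).val (p ^ k) = p ^ s := hseq
  _ ∣ p ^ t := pow_dvd_pow p hle
  _ = Nat.gcd (f j).val (p ^ k) := hteq.symm
  _ ∣ (f j).val := Nat.gcd_dvd_left _ _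

lemma coprime_two_of_odd {m : ℕ} (h : Odd m) : Nat.Coprime 2 m := by
  rw [Nat.Prime.coprime_iff_not_dvd Nat.prime_two]
  rw [← Nat.not_even_iff_odd] at h
  exact fun hdvd => h (even_iff_two_dvd.mpr hdvd)

lemma helper_exists : ∀ (d : ℕ), Odd d → ∀ {n : ℕ}, 2 ≤ n → ∀ (a b : Fin n → ZMod d),
    ∃ α β : Fin n → ZMod d, ip a β = 0 ∧ ip b α = 0 ∧ ip α β = ip a b := by
  intro d
  induction d using Nat.recOnPosPrimePosCoprime with
  | prime_pow p k hpp hkp =>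
    intro hodd n hn a b
    haveI : NeZero (p ^ k) := ⟨(Nat.pow_pos hpp.pos).ne'⟩
    haveI : NeZero n := ⟨by omega⟩
    set D : Fin n → ZMod (p ^ k) := fun i => a i * b i + a (i + 1) * b (i + 1) with hD
    obtain ⟨i₀, hi₀⟩ := exists_dvd_all hpp hkp D
    have hsum : ∑ i, D i = ip a b + ip a b := by
      have h2 : ∑ i : Fin n, a (i + 1) * b (i + 1) = ∑ i, a i * b i :=
        Fintype.sum_equiv (Equiv.addRight (1 : Fin n)) _ _ (fun i => rfl)
      rw [hD, Finset.sum_add_distrib, h2]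
      rfl
    have hdvd : D i₀ ∣ ip a b + ip a b := hsum ▸ Finset.dvd_sum (fun i _ => hi₀ i)
    obtain ⟨s, hs⟩ := hdvd
    -- 2 is invertible
    have hco2 : Nat.Coprime 2 (p ^ k) := coprime_two_of_odd hodd
    set u := ZMod.unitOfCoprime 2 hco2 with hu
    have hu2 : ((u : ZMod (p ^ k)) : ZMod (p ^ k)) = 2 := by
      rw [hu, ZMod.coe_unitOfCoprime]; norm_num
    set c : ZMod (p ^ k) := ((u⁻¹ : (ZMod (p ^ k))ˣ) : ZMod (p ^ k)) with hc
    have h2c : (2 : ZMod (p ^ k)) * c = 1 := by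
      rw [← hu2, hc, ← Units.val_mul, mul_inv_cancel, Units.val_one]
    have hDt : D i₀ * (c * s) = ip a b := by
      have : D i₀ * (c * s) = c * (D i₀ * s) := by ring
      rw [this, ← hs]
      have : ip a b + ip a b = 2 * ip a b := by ring
      rw [this, ← mul_assoc, mul_comm c 2, h2c, one_mul]
    set i₁ : Fin n := i₀ + 1 with hi1
    have hne : i₀ ≠ i₁ := by
      rw [hi1]
      intro h
      have h10 : (1 : Fin n) = 0 := left_eq_add.mp h
      have hvo : (1 : Fin n).val = 1 % n := Fin.val_one' n
      rw [h10] at hvo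
      have : (0 : Fin n).val = 0 := rfl
      rw [this] at hvo
      have : 1 % n = 1 := Nat.mod_eq_of_lt (by omega)
      omega
    set αv : Fin n → ZMod (p ^ k) :=
      Pi.single i₀ (c * s * b i₁) - Pi.single i₁ (c * s * b i₀) with hav
    set βv : Fin n → ZMod (p ^ k) :=
      Pi.single i₀ (a i₁) - Pi.single i₁ (a i₀) with hbv
    refine ⟨αv, βv, ?_, ?_, ?_⟩
    · rw [hbv, ip_sub_right, ip_single_right, ip_single_right]; ring
    · rw [hav, ip_sub_right, ip_single_right, ip_single_right]; ring
    · rw [hbv, ip_sub_right, ip_single_right, ip_single_right]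
      have e1 : αv i₀ = c * s * b i₁ := by
        rw [hav]
        simp [Pi.single_eq_same, Pi.single_eq_of_ne hne]
      have e2 : αv i₁ = -(c * s * b i₀) := by
        rw [hav]
        simp [Pi.single_eq_same, Pi.single_eq_of_ne (Ne.symm hne)]
      rw [e1, e2, ← hDt, hD]
      ring
  | zero => intro h; exact absurd h (by decide)
  | one =>
    intro _ n hn a b
    exact ⟨0, 0, Subsingleton.elim _ _, Subsingleton.elim _ _, Subsingleton.elim _ _⟩
  | coprime d₁ d₂ hd₁ hd₂ hco ih1 ih2 =>
    intro hodd n hn a b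
    obtain ⟨hodd1, hodd2⟩ := Nat.odd_mul.mp hodd
    set φ := ZMod.chineseRemainder hco with hφ
    have key : ∀ x y : Fin n → ZMod (d₁ * d₂), φ (ip x y) =
        (ip (fun i => (φ (x i)).1) (fun i => (φ (y i)).1),
         ip (fun i => (φ (x i)).2) (fun i => (φ (y i)).2)) := by
      intro x y
      show φ (∑ i, x i * y i) = _
      rw [map_sum]
      rw [Prod.ext_iff]
      constructor
      · rw [Prod.fst_sum]
        exact Finset.sum_congr rfl fun i _ => by rw [_root_.map_mul]; rfl
      · rw [Prod.snd_sum]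
        exact Finset.sum_congr rfl fun i _ => by rw [_root_.map_mul]; rfl
    obtain ⟨α₁, β₁, h1a, h1b, h1c⟩ := ih1 hodd1 hn (fun i => (φ (a i)).1) (fun i => (φ (b i)).1)
    obtain ⟨α₂, β₂, h2a, h2b, h2c⟩ := ih2 hodd2 hn (fun i => (φ (a i)).2) (fun i => (φ (b i)).2)
    refine ⟨fun i => φ.symm (α₁ i, α₂ i), fun i => φ.symm (β₁ i, β₂ i), ?_, ?_, ?_⟩
    · apply φ.injective
      rw [key, map_zero]
      simp only [RingEquiv.apply_symm_apply]
      exact Prod.ext h1a h2a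
    · apply φ.injective
      rw [key, map_zero]
      simp only [RingEquiv.apply_symm_apply]
      exact Prod.ext h1b h2b
    · apply φ.injective
      rw [key, key]
      simp only [RingEquiv.apply_symm_apply]
      exact Prod.ext h1c h2c

lemma ip_add_left {d n : ℕ} (a b c : Fin n → ZMod d) : ip (a + b) c = ip a c + ip b c := by
  rw [ip_comm, ip_add_right, ip_comm a c, ip_comm b c]

lemma ip_neg_left {d n : ℕ} (a b : Fin n → ZMod d) : ip (-a) b = -ip a b := by
  rw [ip_comm, ip_neg_right, ip_comm]

section CHAR
variable {d n : ℕ} [NeZero d]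

lemma lam_char (hd : Odd d) (hn : 2 ≤ n)
    (L : PS d n → ℂ) (hroot : ∀ u, L u ^ d = 1)
    (hadd : ∀ u v : PS d n, symp u v = 0 → L (u + v) = L u * L v) :
    ∀ u v : PS d n, L (u + v) = L u * L v := by
  have hdne : d ≠ 0 := NeZero.ne d
  have hLne : ∀ u, L u ≠ 0 := by
    intro u h
    have h1 := hroot u
    rw [h, zero_pow hdne] at h1
    exact one_ne_zero h1.symm
  have hL0 : L 0 = 1 := by
    have h := hadd 0 0 (sub_self _)
    rw [add_zero] at h
    have : L 0 * 1 = L 0 * L 0 := by rw [mul_one]; exact h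
    exact (mul_left_cancel₀ (hLne 0) this).symm
  have hinv : ∀ u : PS d n, L u * L (-u) = 1 := by
    intro u
    have hs : symp u (-u) = 0 := by
      show ip u.1 (-u).2 - ip u.2 (-u).1 = 0
      have e1 : (-u).2 = -u.2 := rfl
      have e2 : (-u).1 = -u.1 := rfl
      rw [e1, e2, ip_neg_right, ip_neg_right, ip_comm u.2 u.1]
      ring
    have h := hadd u (-u) hs
    rw [add_neg_cancel, hL0] at h
    exact h.symm
  have Zmul : ∀ x y : Fin n → ZMod d, L (x + y, 0) = L (x, 0) * L (y, 0) := by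
    intro x y
    have hs : symp ((x, 0) : PS d n) (y, 0) = 0 := by
      show ip x 0 - ip (0 : Fin n → ZMod d) y = 0
      rw [ip_zero_right, ip_zero_left, sub_zero]
    have h := hadd (x, 0) (y, 0) hs
    rw [Prod.mk_add_mk, add_zero] at h
    exact h
  have Xmul : ∀ x y : Fin n → ZMod d, L (0, x + y) = L (0, x) * L (0, y) := by
    intro x y
    have hs : symp ((0, x) : PS d n) (0, y) = 0 := by
      show ip (0 : Fin n → ZMod d) y - ip x 0 = 0
      rw [ip_zero_right, ip_zero_left, sub_zero]
    have h := hadd (0, x) (0, y) hs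
    rw [Prod.mk_add_mk, add_zero] at h
    exact h
  have split : ∀ x y : Fin n → ZMod d, ip x y = 0 → L (x, y) = L (x, 0) * L (0, y) := by
    intro x y hxy
    have hs : symp ((x, 0) : PS d n) (0, y) = 0 := by
      show ip x y - ip (0 : Fin n → ZMod d) 0 = 0
      rw [hxy, ip_zero_left, sub_zero]
    have h := hadd (x, 0) (0, y) hs
    rw [Prod.mk_add_mk, add_zero, zero_add] at h
    exact h
  have main : ∀ x y : Fin n → ZMod d, L (x, y) = L (x, 0) * L (0, y) := by
    intro x y
    obtain ⟨α, β, hbe, hal, hmu⟩ := helper_exists d hd hn x y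
    have hbe' : ip β x = 0 := by rw [ip_comm]; exact hbe
    have hal' : ip α y = 0 := by rw [ip_comm]; exact hal
    -- eq1
    have hs1 : symp ((x, y) : PS d n) (α, -β) = 0 := by
      show ip x (-β) - ip y α = 0
      rw [ip_neg_right, hbe, hal]
      ring
    have eq1' := hadd (x, y) (α, -β) hs1
    rw [Prod.mk_add_mk] at eq1'
    have hsplit1 : ip (x + α) (y + -β) = 0 := by
      rw [ip_add_left, ip_add_right, ip_add_right, ip_neg_right, ip_neg_right,
        hbe, hmu, ip_comm α y, hal]
      ring
    have eq1 : L (x, y) * L (α, -β) = (L (x, 0) * L (α, 0)) * (L (0, y) * L (0, -β)) := by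
      rw [← eq1', split _ _ hsplit1, Zmul, Xmul]
    -- eq2
    have hs2 : symp ((α, -β) : PS d n) (-x, -y) = 0 := by
      show ip α (-y) - ip (-β) (-x) = 0
      simp only [ip_neg_right, ip_neg_left, hal', hbe, hbe', hal, neg_zero, neg_neg,
        sub_zero, zero_sub, sub_self]
    have eq2' := hadd (α, -β) (-x, -y) hs2
    rw [Prod.mk_add_mk] at eq2'
    have hsplit2 : ip (α + -x) (-β + -y) = 0 := by
      have hexp : ip (α + -x) (-β + -y)
          = -(ip α β) + -(ip α y) + (ip x β + ip x y) := by
        rw [ip_add_left, ip_add_right, ip_add_right, ip_neg_left, ip_neg_left,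
          ip_neg_right, ip_neg_right, ip_neg_right, ip_neg_right]
        ring
      rw [hexp, hmu, hal', hbe]
      ring
    have eq2 : L (α, -β) * L (-x, -y) = (L (α, 0) * L (-x, 0)) * (L (0, -β) * L (0, -y)) := by
      rw [← eq2', split _ _ hsplit2, Zmul, Xmul]
    -- abbreviations
    set A := L (x, y) with hA
    set A' := L (-x, -y) with hA'
    set B := L (x, 0) with hB
    set B' := L (-x, 0) with hB'
    set C := L (0, y) with hC
    set C' := L (0, -y) with hC'
    set E := L (α, 0) with hE
    set F := L (0, -β) with hF
    set G := L (α, -β) with hG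
    have hAA' : A * A' = 1 := by
      have := hinv ((x, y) : PS d n)
      have hneg : (-(x, y) : PS d n) = (-x, -y) := rfl
      rw [hneg] at this; exact this
    have hBB' : B * B' = 1 := by
      have := hinv ((x, 0) : PS d n)
      have hneg : (-(x, (0 : Fin n → ZMod d)) : PS d n) = (-x, 0) := by
        rw [Prod.neg_mk, neg_zero]
      rw [hneg] at this; exact this
    have hCC' : C * C' = 1 := by
      have := hinv ((0, y) : PS d n)
      have hneg : (-((0 : Fin n → ZMod d), y) : PS d n) = (0, -y) := by
        rw [Prod.neg_mk, neg_zero]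
      rw [hneg] at this; exact this
    have eqX : A * (E * B' * (F * C')) = B * E * (C * F) * A' := by
      calc A * (E * B' * (F * C')) = A * (G * A') := by rw [← eq2]
      _ = (A * G) * A' := by ring
      _ = B * E * (C * F) * A' := by rw [eq1]
    have hEne : E ≠ 0 := hLne _
    have hFne : F ≠ 0 := hLne _
    have hsq : A * A = (B * C) * (B * C) := by
      have h6 : (A * A) * (E * F) * (B' * B) * (C' * C)
          = ((B * C) * (B * C)) * (A' * A) * (E * F) := by
        calc (A * A) * (E * F) * (B' * B) * (C' * C)
            = (A * (E * B' * (F * C'))) * (A * B * C) := by ring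
        _ = (B * E * (C * F) * A') * (A * B * C) := by rw [eqX]
        _ = ((B * C) * (B * C)) * (A' * A) * (E * F) := by ring
      rw [mul_comm B' B, hBB', mul_comm C' C, hCC', mul_comm A' A, hAA'] at h6
      simp only [mul_one] at h6
      exact mul_right_cancel₀ (mul_ne_zero hEne hFne) h6
    -- now use odd d
    obtain ⟨kk, hk⟩ := hd
    have hdpow : A ^ d = (B * C) ^ d := by
      rw [hroot, mul_pow, hroot, hroot, one_mul]
    have hApow : A ^ d = ((B * C) * (B * C)) ^ kk * A := by
      rw [hk, pow_succ, pow_mul, sq, hsq]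
    have hBCpow : (B * C) ^ d = ((B * C) * (B * C)) ^ kk * (B * C) := by
      rw [hk, pow_succ, pow_mul, sq]
    have hfin : ((B * C) * (B * C)) ^ kk * A = ((B * C) * (B * C)) ^ kk * (B * C) := by
      rw [← hApow, hdpow, hBCpow]
    have hBCne : (B * C) ≠ 0 := mul_ne_zero (hLne _) (hLne _)
    exact mul_left_cancel₀ (pow_ne_zero _ (mul_ne_zero hBCne hBCne)) hfin
  intro u v
  obtain ⟨u1, u2⟩ := u
  obtain ⟨v1, v2⟩ := v
  rw [Prod.mk_add_mk, main, Zmul, Xmul, main u1 u2, main v1 v2]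
  ring

end CHAR

lemma omeg_pow_d (d : ℕ) [NeZero d] : omeg d ^ d = 1 := by
  unfold omeg
  rw [← Complex.exp_nat_mul]
  have hne : (d : ℂ) ≠ 0 := Nat.cast_ne_zero.mpr (NeZero.ne d)
  have : (d : ℂ) * (2 * Real.pi * Complex.I / d) = 2 * Real.pi * Complex.I := by
    field_simp
  rw [this, Complex.exp_two_pi_mul_I]

lemma omeg_pow_mod (d : ℕ) [NeZero d] (k : ℕ) : omeg d ^ (k % d) = omeg d ^ k := by
  conv_rhs => rw [← Nat.div_add_mod k d]
  rw [pow_add, pow_mul, omeg_pow_d, one_pow, one_mul]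

lemma wpow_add (d : ℕ) [NeZero d] (x y : ZMod d) : wpow d (x + y) = wpow d x * wpow d y := by
  unfold wpow
  rw [ZMod.val_add, omeg_pow_mod, pow_add]

lemma T_nonneg {d n : ℕ} [NeZero d] (hd : Odd d) (hn : 2 ≤ n) (u : PS d n)
    (L : PS d n → ℂ) (hroot : ∀ v, L v ^ d = 1)
    (hadd : ∀ v w : PS d n, symp v w = 0 → L (v + w) = L v * L w) :
    ∃ r : ℝ, 0 ≤ r ∧ ∑ v : PS d n, wpow d (symp u v) * L v = (r : ℂ) := by
  have hchar := lam_char hd hn L hroot hadd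
  set g : PS d n → ℂ := fun v => wpow d (symp u v) * L v with hg
  have hsum : ∑ v : PS d n, wpow d (symp u v) * L v = ∑ v : PS d n, g v := rfl
  rw [hsum]
  have hgmul : ∀ v w, g (v + w) = g v * g w := by
    intro v w
    rw [hg]
    simp only
    rw [symp_add_right, wpow_add, hchar]
    ring
  by_cases hall : ∀ w, g w = 1
  · refine ⟨(Fintype.card (PS d n) : ℝ), by positivity, ?_⟩
    rw [Finset.sum_congr rfl (fun v _ => hall v)]
    simp
  · push_neg at hall
    obtain ⟨w, hw⟩ := hall
    refine ⟨0, le_refl _, ?_⟩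
    have hT : (∑ v : PS d n, g v) * g w = ∑ v : PS d n, g v := by
      rw [Finset.sum_mul]
      rw [Finset.sum_congr rfl (fun v _ => (hgmul v w).symm)]
      exact Fintype.sum_equiv (Equiv.addRight w) _ _ (fun v => rfl)
    have hz : (∑ v : PS d n, g v) * (g w - 1) = 0 := by
      rw [mul_sub, hT, mul_one, sub_self]
    rcases mul_eq_zero.mp hz with h | h
    · rw [h]; norm_num
    · exact absurd (sub_eq_zero.mp h) hw

end AuxLemmas

theorem stmt16 (d n : ℕ) [NeZero d] (hd : Odd d) (hd1 : 1 < d) (hn : 2 ≤ n)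
    (ρ : Matrix (Fin n → ZMod d) (Fin n → ZMod d) ℂ)
    (hρ : ρ.PosSemidef) (htr : ρ.trace = 1)
    (S : Type*) [Fintype S] (q : S → ℝ)
    (hq : ∀ ν, 0 ≤ q ν) (hq1 : ∑ ν, q ν = 1)
    (lam : S → PS d n → ℂ)
    (hroot : ∀ ν u, (lam ν u) ^ d = 1)
    (hadd : ∀ ν (u v : PS d n), symp u v = 0 → lam ν (u + v) = lam ν u * lam ν v)
    (hpred : ∀ u : PS d n, (HW d n u * ρ).trace = ∑ ν, lam ν u * (q ν : ℂ)) :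
    ∀ u : PS d n, ∃ r : ℝ, 0 ≤ r ∧
      ((d : ℂ) ^ n)⁻¹ * (phasePoint d n u * ρ).trace = (r : ℂ) := by
  intro u
  -- choose nonnegative values of the Fourier sums
  have hT : ∀ ν : S, ∃ r : ℝ, 0 ≤ r ∧
      ∑ v : PS d n, wpow d (symp u v) * lam ν v = (r : ℂ) :=
    fun ν => T_nonneg hd hn u (lam ν) (hroot ν) (hadd ν)
  choose rr hrr0 hrrEq using hT
  refine ⟨((d : ℝ) ^ n)⁻¹ * (((d : ℝ) ^ n)⁻¹ * ∑ ν, rr ν * q ν), ?_, ?_⟩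
  · have hsum : 0 ≤ ∑ ν, rr ν * q ν :=
      Finset.sum_nonneg fun ν _ => mul_nonneg (hrr0 ν) (hq ν)
    positivity
  · have tr1 : (phasePoint d n u * ρ).trace
        = ((d : ℂ) ^ n)⁻¹ * ∑ v : PS d n, wpow d (symp u v) * (HW d n v * ρ).trace := by
      rw [phasePoint, smul_mul_assoc, Matrix.trace_smul, smul_eq_mul]
      congr 1
      rw [Finset.sum_mul, Matrix.trace_sum]
      exact Finset.sum_congr rfl fun v _ => by
        rw [smul_mul_assoc, Matrix.trace_smul, smul_eq_mul]
    have tr2 : ∑ v : PS d n, wpow d (symp u v) * (HW d n v * ρ).trace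
        = ∑ ν, (rr ν : ℂ) * (q ν : ℂ) := by
      have step1 : ∀ v : PS d n, wpow d (symp u v) * (HW d n v * ρ).trace
          = ∑ ν, wpow d (symp u v) * lam ν v * (q ν : ℂ) := by
        intro v
        rw [hpred v, Finset.mul_sum]
        exact Finset.sum_congr rfl fun ν _ => by ring
      rw [Finset.sum_congr rfl fun v _ => step1 v, Finset.sum_comm]
      refine Finset.sum_congr rfl fun ν _ => ?_
      rw [← Finset.sum_mul, hrrEq ν]
    rw [tr1, tr2]
    push_cast
    rw [Finset.mul_sum]
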